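/- Right application is compatible with composition up to failures equivalence: ((P ; Q) | R⟩ ≈_f (P | (Q | R⟩⟩ for all processes P, Q, R. -/

import Mathlib

set_option linter.unnecessarySeqFocus false
set_option linter.unreachableTactic false
set_option linter.unusedTactic false

/-! # CCS with simultaneous actions (Abramsky, "Process Realizability") -/

/-- Labels: names (`inl`) and co-names (`inr`). -/
abbrev Label : Type := ℕ ⊕ ℕ

/-- The involution `λ ↦ λ̄` exchanging names and co-names. -/
def Label.bar : Label → Label
  | .inl n => .inr n
  | .inr n => .inl n

/-- Actions: finite sets of labels, performed simultaneously.  `τ = ∅`. -/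
abbrev Act : Type := Finset Label

/-- A renaming: a partial injective function on labels preserving the involution. -/
structure Renaming where
  toFun : Label → Option Label
  inj : ∀ ⦃x y z : Label⦄, toFun x = some z → toFun y = some z → x = y
  bar : ∀ x : Label, toFun (Label.bar x) = (toFun x).map Label.bar

/-- The pointwise extension of a renaming to actions. -/
def Renaming.onAction (f : Renaming) (a : Act) : Act :=
  a.filterMap f.toFun (fun _ _ _ hx hy => f.inj (Option.mem_def.mp hx) (Option.mem_def.mp hy))

/-- Guarded process terms of CCS with simultaneous actions:
prefix, countably-indexed guarded sums (all guards non-`τ`), parallel composition,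
restriction, renaming, process variables (de Bruijn) and recursion. -/
inductive Proc : Type where
  | pre (a : Act) (P : Proc)
  | sum (I : Set ℕ) (act : ℕ → Act) (cont : ℕ → Proc) (hg : ∀ n ∈ I, (act n).Nonempty)
  | par (P Q : Proc)
  | restrict (P : Proc) (L : Set Label)
  | rename (P : Proc) (f : Renaming)
  | var (n : ℕ)
  | fix (P : Proc)

/-- The inactive process `0` (the empty sum). -/
def Proc.nil : Proc := .sum ∅ (fun _ => ∅) (fun _ => .var 0) (by simp)

/-- Substitution of a process for the variable with de Bruijn index `d`. -/
def Proc.subst (R : Proc) : ℕ → Proc → Proc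
  | d, .pre a P => .pre a (Proc.subst R d P)
  | d, .sum I act cont hg => .sum I act (fun n => Proc.subst R d (cont n)) hg
  | d, .par P Q => .par (Proc.subst R d P) (Proc.subst R d Q)
  | d, .restrict P L => .restrict (Proc.subst R d P) L
  | d, .rename P f => .rename (Proc.subst R d P) f
  | d, .var n => if n = d then R else .var n
  | d, .fix P => .fix (Proc.subst R (d + 1) P)

/-- The labelled transition relation, with the generalized synchronization rule
for simultaneous (compound) actions. -/
inductive Step : Proc → Act → Proc → Prop where
  | pre {a P} : Step (.pre a P) a P
  | sum {I act cont hg} (j : ℕ) (hj : j ∈ I) : Step (.sum I act cont hg) (act j) (cont j)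
  | restrict {P a Q L} : Step P a Q → (∀ l ∈ a, l ∉ L ∧ Label.bar l ∉ L) →
      Step (.restrict P L) a (.restrict Q L)
  | rename {P a Q} {f : Renaming} : Step P a Q → (∀ l ∈ a, (f.toFun l).isSome) →
      Step (.rename P f) (f.onAction a) (.rename Q f)
  | fix {P a Q} : Step (Proc.subst (.fix P) 0 P) a Q → Step (.fix P) a Q
  | parL {P a P' Q} : Step P a P' → Step (.par P Q) a (.par P' Q)
  | parR {P Q a Q'} : Step Q a Q' → Step (.par P Q) a (.par P Q')
  | sync {P Q P' Q' a b c} : Step P (a ∪ b) P' → Step Q (b.image Label.bar ∪ c) Q' →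
      Disjoint a b → Disjoint (b.image Label.bar) c → Disjoint a c →
      Step (.par P Q) (a ∪ c) (.par P' Q')

/-- Zero or more silent (`τ`) transitions. -/
def TauStar : Proc → Proc → Prop :=
  Relation.ReflTransGen (fun P Q => Step P ∅ Q)

/-- Observable transition `P ⟹a Q`: `τ* a τ*`. -/
def Obs (P : Proc) (a : Act) (Q : Proc) : Prop :=
  ∃ P₁ P₂, TauStar P P₁ ∧ Step P₁ a P₂ ∧ TauStar P₂ Q

/-- Observable transitions along a string of (non-`τ`) actions. -/
inductive ObsSeq : Proc → List Act → Proc → Prop where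
  | nil {P Q} : TauStar P Q → ObsSeq P [] Q
  | cons {P a Q s R} : Obs P a Q → ObsSeq Q s R → ObsSeq P (a :: s) R

/-- The failures of a process: pairs `(s, X)` with `s` a string of nonempty actions and
`X` a set of nonempty actions such that `P ⟹s Q` for some `Q` refusing every action of `X`. -/
def failures (P : Proc) : Set (List Act × Set Act) :=
  { sX | (∀ a ∈ sX.1, a.Nonempty) ∧ (∀ a ∈ sX.2, a.Nonempty) ∧
      ∃ Q, ObsSeq P sX.1 Q ∧ ∀ a ∈ sX.2, ¬∃ R, Obs Q a R }

/-- Failures equivalence. -/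
def FailEq (P Q : Proc) : Prop := failures P = failures Q

/-- Weak simulations (with respect to the observable transitions). -/
def IsWeakSim (R : Proc → Proc → Prop) : Prop :=
  ∀ ⦃P Q⦄, R P Q →
    (∀ P', TauStar P P' → ∃ Q', TauStar Q Q' ∧ R P' Q') ∧
    (∀ a P', (a : Act).Nonempty → Obs P a P' → ∃ Q', Obs Q a Q' ∧ R P' Q')

/-- Weak bisimilarity. -/
def WeakBisim (P Q : Proc) : Prop :=
  ∃ R : Proc → Proc → Prop, IsWeakSim R ∧ IsWeakSim (fun x y => R y x) ∧ R P Q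
/-! ## The split name space and the basic combinators -/

/-- Build a bar-preserving partial injective renaming from a partial injective map on names. -/
def Renaming.ofNameFun (f : ℕ → Option ℕ)
    (hf : ∀ ⦃x y z : ℕ⦄, f x = some z → f y = some z → x = y) : Renaming where
  toFun := fun l =>
    match l with
    | .inl n => (f n).map .inl
    | .inr n => (f n).map .inr
  inj := by
    rintro (x | x) (y | y) (z | z) hx hy <;>
      simp only [Option.map_eq_some_iff] at hx hy <;>
      obtain ⟨a, ha, ha'⟩ := hx <;> obtain ⟨b, hb, hb'⟩ := hy <;>
        solve
          | (cases ha'; cases hb'; exact congrArg _ (hf ha hb))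
          | (cases hb')
          | (cases ha')
  bar := by
    rintro (n | n) <;> cases hf : f n <;> simp [Label.bar, hf]

/-- The underlying name of a label. -/
def Label.name : Label → ℕ := Sum.elim id id

/-- The injection `l` of the name space onto its "left" half (even names). -/
def lRen : Renaming := Renaming.ofNameFun (fun n => some (2 * n)) (by intro x y z hx hy; simp only [Option.some.injEq] at hx hy; omega)

/-- The injection `r` of the name space onto its "right" half (odd names). -/
def rRen : Renaming := Renaming.ofNameFun (fun n => some (2 * n + 1)) (by intro x y z hx hy; simp only [Option.some.injEq] at hx hy; omega)

/-- The partial inverse `l⁻¹` of `l`. -/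
def lInv : Renaming :=
  Renaming.ofNameFun (fun n => if n % 2 = 0 then some (n / 2) else none)
    (by intro x y z hx hy; try dsimp only at hx hy
        split at hx <;> split at hy <;> simp_all <;> omega)

/-- The partial inverse `r⁻¹` of `r`. -/
def rInv : Renaming :=
  Renaming.ofNameFun (fun n => if n % 2 = 1 then some (n / 2) else none)
    (by intro x y z hx hy; try dsimp only at hx hy
        split at hx <;> split at hy <;> simp_all <;> omega)

/-- The left half `ℒ_l` of the label space. -/
def LabL : Set Label := {x | x.name % 2 = 0}

/-- The right half `ℒ_r` of the label space. -/
def LabR : Set Label := {x | x.name % 2 = 1}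

/-- Tensor product: disjoint (non-communicating) parallel composition `P[l] | Q[r]`. -/
def tensor (P Q : Proc) : Proc := .par (P.rename lRen) (Q.rename rRen)

/-- Left (forwards) application `⟨Q | P⟩ = ((Q[l] | P) ∖ ℒ_l)[r⁻¹]`. -/
def lapp (Q P : Proc) : Proc := ((Proc.par (Q.rename lRen) P).restrict LabL).rename rInv

/-- Right (reverse) application `(P | R⟩ = ((P | R[r]) ∖ ℒ_r)[l⁻¹]`. -/
def rapp (P R : Proc) : Proc := ((Proc.par P (R.rename rRen)).restrict LabR).rename lInv

/-! ### The three-fold decomposition `𝒩 = 𝒩₁ ∪̇ 𝒩₂ ∪̇ 𝒩₃` and composition -/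

/-- `φ₁₂ : 𝒩 ≅ 𝒩₁ ∪̇ 𝒩₂` (`𝒩ᵢ` = names `≡ i - 1 (mod 3)`), carrying `𝒩_l` onto `𝒩₁`, `𝒩_r` onto `𝒩₂`. -/
def phi12 : Renaming :=
  Renaming.ofNameFun (fun n => some (if n % 2 = 0 then 3 * (n / 2) else 3 * (n / 2) + 1))
    (by intro x y z hx hy; try dsimp only at hx hy
        simp only [Option.some.injEq] at hx hy
        split at hx <;> split at hy <;> omega)

/-- `φ₂₃ : 𝒩 ≅ 𝒩₂ ∪̇ 𝒩₃`, carrying `𝒩_l` onto `𝒩₂`, `𝒩_r` onto `𝒩₃`. -/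
def phi23 : Renaming :=
  Renaming.ofNameFun (fun n => some (if n % 2 = 0 then 3 * (n / 2) + 1 else 3 * (n / 2) + 2))
    (by intro x y z hx hy; try dsimp only at hx hy
        simp only [Option.some.injEq] at hx hy
        split at hx <;> split at hy <;> omega)

/-- The partial inverse `φ₁₃⁻¹` of `φ₁₃ : 𝒩 ≅ 𝒩₁ ∪̇ 𝒩₃`. -/
def phi13Inv : Renaming :=
  Renaming.ofNameFun
    (fun n => if n % 3 = 0 then some (2 * (n / 3)) else if n % 3 = 2 then some (2 * (n / 3) + 1) else none)
    (by intro x y z hx hy; try dsimp only at hx hy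
        split at hx <;> split at hy <;> simp_all <;> omega)

/-- The middle part `𝒩₂` of the label space (as a set of labels). -/
def Lab2 : Set Label := {x | x.name % 3 = 1}

/-- Composition `P ; Q = ((P[φ₁₂] | Q[φ₂₃]) ∖ 𝒩₂)[φ₁₃⁻¹]`. -/
def comp (P Q : Proc) : Proc :=
  ((Proc.par (P.rename phi12) (Q.rename phi23)).restrict Lab2).rename phi13Inv

/-! ### The identity (wire) process -/

/-- The identity process `I = rec X. Σ_{a ∈ Act₊} (l(a) ∪ r(a)‾).X`. -/
noncomputable def Iproc : Proc :=
  .fix (.sum {n | ∃ a : Act, (Encodable.decode n : Option Act) = some a ∧ a.Nonempty}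
    (fun n =>
      match (Encodable.decode n : Option Act) with
      | some a => lRen.onAction a ∪ (rRen.onAction a).image Label.bar
      | none => {Sum.inl 0})
    (fun _ => .var 0)
    (by rintro n ⟨a, ha, hne⟩
        simp only [ha]
        obtain ⟨x, hx⟩ := hne
        refine Finset.Nonempty.mono Finset.subset_union_left ⟨(Sum.map (2 * ·) (2 * ·)) x, ?_⟩
        simp only [Renaming.onAction, Finset.mem_filterMap]
        exact ⟨x, hx, by cases x <;> rfl⟩))

/-! ## Guarded choice combinators, the additive pairing and injections, `!P`, divergence -/

/-- Binary guarded sum `a.P + b.Q` (guards must be non-`τ`). -/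
def gsum2 (a : Act) (P : Proc) (b : Act) (Q : Proc) (ha : a.Nonempty) (hb : b.Nonempty) : Proc :=
  .sum {0, 1} (fun n => if n = 0 then a else b) (fun n => if n = 0 then P else Q)
    (by intro n _; (try dsimp only); split <;> assumption)

/-- Ternary guarded sum `a.P + b.Q + c.R`. -/
def gsum3 (a : Act) (P : Proc) (b : Act) (Q : Proc) (c : Act) (R : Proc)
    (ha : a.Nonempty) (hb : b.Nonempty) (hc : c.Nonempty) : Proc :=
  .sum {0, 1, 2} (fun n => if n = 0 then a else if n = 1 then b else c)
    (fun n => if n = 0 then P else if n = 1 then Q else R)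
    (by intro n _; (try dsimp only); split <;> [skip; split] <;> assumption)

/-- The distinguished names: `α = 0`, `β = 1`, `ω = 2`, `δ = 3`, `γ = 4`, `σ = 5`. -/
def αAct : Act := {Sum.inl 0}
def βAct : Act := {Sum.inl 1}
def αBar : Act := {Sum.inr 0}
def βBar : Act := {Sum.inr 1}
def ωAct : Act := {Sum.inl 2}
def δBar : Act := {Sum.inr 3}
def γBar : Act := {Sum.inr 4}

/-- The additive pairing `⟨P, Q⟩ = r(α).P + r(β).Q`  (`r(α) = 1`, `r(β) = 3`). -/
def pairR (P Q : Proc) : Proc :=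
  gsum2 {Sum.inl 1} P {Sum.inl 3} Q (Finset.singleton_nonempty _) (Finset.singleton_nonempty _)

/-- The plain additive pairing `α.P + β.Q` used in the realizability clauses for `&`. -/
def pairProc (P Q : Proc) : Proc :=
  gsum2 αAct P βAct Q (Finset.singleton_nonempty _) (Finset.singleton_nonempty _)

/-- The left injection `l(P) = l(α)‾.P`  (`l(α) = 0`). -/
def injl (P : Proc) : Proc := .pre {Sum.inr 0} P

/-- The right injection `r(Q) = r(β)‾.Q`  (`r(β) = 3`). -/
def injr (Q : Proc) : Proc := .pre {Sum.inr 3} Q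

/-- The exponential combinator `!P = rec X.(ω.0 + δ.P + γ.(X[l] | X[r]))`. -/
def bangProc (P : Proc) : Proc :=
  .fix (gsum3 ωAct Proc.nil ({Sum.inl 3} : Act) P ({Sum.inl 4} : Act)
    (.par (Proc.rename (.var 0) lRen) (Proc.rename (.var 0) rRen))
    (Finset.singleton_nonempty _) (Finset.singleton_nonempty _) (Finset.singleton_nonempty _))

/-- `P` diverges if there is an infinite sequence of `τ`-transitions from `P`. -/
def Diverges (P : Proc) : Prop :=
  ∃ f : ℕ → Proc, f 0 = P ∧ ∀ n, Step (f n) ∅ (f (n + 1))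

/-- `P ⊥ Q`: closing the system, `P` and `Q` interacting with each other yield no divergence. -/
def Orth (P Q : Proc) : Prop := ¬ Diverges ((Proc.par P Q).restrict Set.univ)

/-! ## Auxiliary development for `rapp_comp_failures` -/

namespace RappComp

/-- Apply a name function to both components of a label. -/
def mapL (g : ℕ → ℕ) : Label → Label := Sum.map g g

@[simp] lemma name_mapL (g : ℕ → ℕ) (l : Label) : (mapL g l).name = g l.name := by
  cases l <;> rfl

@[simp] lemma name_bar (l : Label) : (Label.bar l).name = l.name := by cases l <;> rfl

lemma bar_mapL (g : ℕ → ℕ) (l : Label) : Label.bar (mapL g l) = mapL g (Label.bar l) := by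
  cases l <;> rfl

@[simp] lemma bar_bar (l : Label) : Label.bar (Label.bar l) = l := by cases l <;> rfl

lemma mapL_injective {g : ℕ → ℕ} (hg : Function.Injective g) : Function.Injective (mapL g) := by
  rintro (a | a) (b | b) h <;> simp [mapL] at h <;> simp [hg h]

/-- Name functions used throughout. -/
def g12 (n : ℕ) : ℕ := 3 * (n / 2) + n % 2
def g23 (n : ℕ) : ℕ := 3 * (n / 2) + n % 2 + 1
def g13i (n : ℕ) : ℕ := 2 * (n / 3) + (n % 3) / 2
def gl (n : ℕ) : ℕ := 2 * n
def gr (n : ℕ) : ℕ := 2 * n + 1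
def gh (n : ℕ) : ℕ := n / 2

/-- The synchronization maps. -/
def pq (l : Label) : Label := Label.bar (mapL (fun n => n - 1) l)
def qr (l : Label) : Label := Label.bar (mapL gh l)

lemma onAction_eq_image (f : ℕ → Option ℕ) (hf) (g : ℕ → ℕ) (a : Act)
    (h : ∀ l ∈ a, f l.name = some (g l.name)) :
    (Renaming.ofNameFun f hf).onAction a = a.image (mapL g) := by
  ext y
  simp only [Renaming.onAction, Finset.mem_filterMap, Finset.mem_image]
  constructor
  · rintro ⟨x, hx, he⟩
    refine ⟨x, hx, ?_⟩
    have := h x hx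
    cases x <;> simp_all [Renaming.ofNameFun, Label.name, mapL]
  · rintro ⟨x, hx, rfl⟩
    refine ⟨x, hx, ?_⟩
    have := h x hx
    cases x <;> simp_all [Renaming.ofNameFun, Label.name, mapL]

@[simp] lemma onAction_empty (f : Renaming) : f.onAction ∅ = ∅ := by
  simp [Renaming.onAction]

lemma onAction_phi12 (a : Act) : phi12.onAction a = a.image (mapL g12) := by
  refine onAction_eq_image _ _ _ _ fun l _ => ?_
  simp only [g12]; split_ifs with h <;> congr 1 <;> omega

lemma onAction_phi23 (a : Act) : phi23.onAction a = a.image (mapL g23) := by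
  refine onAction_eq_image _ _ _ _ fun l _ => ?_
  simp only [g23]; split_ifs with h <;> congr 1 <;> omega

lemma onAction_lRen (a : Act) : lRen.onAction a = a.image (mapL gl) := by
  exact onAction_eq_image _ _ _ _ fun l _ => rfl

lemma onAction_rRen (a : Act) : rRen.onAction a = a.image (mapL gr) := by
  exact onAction_eq_image _ _ _ _ fun l _ => rfl

lemma onAction_lInv (a : Act) (h : ∀ l ∈ a, l.name % 2 = 0) :
    lInv.onAction a = a.image (mapL gh) := by
  refine onAction_eq_image _ _ _ _ fun l hl => ?_
  simp only [gh, h l hl, if_pos]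

lemma onAction_phi13Inv (a : Act) (h : ∀ l ∈ a, l.name % 3 ≠ 1) :
    phi13Inv.onAction a = a.image (mapL g13i) := by
  refine onAction_eq_image _ _ _ _ fun l hl => ?_
  have := h l hl
  simp only [g13i]
  split_ifs with h1 h2 <;> first | (congr 1; omega) | omega

lemma isSome_phi12 (l : Label) : (phi12.toFun l).isSome := by cases l <;> rfl
lemma isSome_phi23 (l : Label) : (phi23.toFun l).isSome := by cases l <;> rfl
lemma isSome_lRen (l : Label) : (lRen.toFun l).isSome := by cases l <;> rfl
lemma isSome_rRen (l : Label) : (rRen.toFun l).isSome := by cases l <;> rfl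

lemma isSome_lInv {l : Label} (h : l.name % 2 = 0) : (lInv.toFun l).isSome := by
  cases l <;> simp_all [lInv, Renaming.ofNameFun, Label.name]

lemma isSome_phi13Inv {l : Label} (h : l.name % 3 ≠ 1) : (phi13Inv.toFun l).isSome := by
  cases l <;> simp only [phi13Inv, Renaming.ofNameFun] <;> split_ifs <;>
    simp_all [Label.name] <;> omega

@[simp] lemma mem_LabR {l : Label} : l ∈ LabR ↔ l.name % 2 = 1 := Iff.rfl
@[simp] lemma mem_Lab2 {l : Label} : l ∈ Lab2 ↔ l.name % 3 = 1 := Iff.rfl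

/-! ### Parity split of actions -/

/-- Even-named part of an action. -/
def ev (a : Act) : Act := a.filter (fun l => l.name % 2 = 0)
/-- Odd-named part of an action. -/
def od (a : Act) : Act := a.filter (fun l => l.name % 2 = 1)

@[simp] lemma mem_ev {a : Act} {l : Label} : l ∈ ev a ↔ l ∈ a ∧ l.name % 2 = 0 := by
  simp [ev]
@[simp] lemma mem_od {a : Act} {l : Label} : l ∈ od a ↔ l ∈ a ∧ l.name % 2 = 1 := by
  simp [od]

@[simp] lemma ev_empty : ev ∅ = ∅ := rfl
@[simp] lemma od_empty : od ∅ = ∅ := rfl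

lemma ev_union_od (a : Act) : ev a ∪ od a = a := by
  ext l; by_cases h : l ∈ a <;> simp [h] <;> omega

@[simp] lemma ev_union (a b : Act) : ev (a ∪ b) = ev a ∪ ev b := Finset.filter_union _ _ _
@[simp] lemma od_union (a b : Act) : od (a ∪ b) = od a ∪ od b := Finset.filter_union _ _ _

@[simp] lemma ev_ev (a : Act) : ev (ev a) = ev a := by ext l; simp
@[simp] lemma od_od (a : Act) : od (od a) = od a := by ext l; simp
@[simp] lemma ev_od (a : Act) : ev (od a) = ∅ := by ext l; simp
@[simp] lemma od_ev (a : Act) : od (ev a) = ∅ := by ext l; simp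

lemma sdiff_od (a : Act) : a \ od a = ev a := by
  ext l; by_cases h : l ∈ a <;> simp [h] <;> omega

lemma sdiff_ev (a : Act) : a \ ev a = od a := by
  ext l; by_cases h : l ∈ a <;> simp [h] <;> omega

/-! ### Optional steps -/

/-- `P` either performs `a` reaching `P'`, or stays idle (`a = τ`, `P' = P`). -/
def OS (P : Proc) (a : Act) (P' : Proc) : Prop := Step P a P' ∨ (a = ∅ ∧ P' = P)

/-- An optional step together with a genuineness guarantee under hypothesis `g`. -/
def OSG (P : Proc) (a : Act) (P' : Proc) (g : Prop) : Prop :=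
  OS P a P' ∧ (g → Step P a P')

lemma OSG.os {P a P' g} (h : OSG P a P' g) : OS P a P' := h.1

lemma OSG.mono {P a P' g g'} (h : OSG P a P' g) (hg : g' → g) : OSG P a P' g' :=
  ⟨h.1, fun x => h.2 (hg x)⟩

lemma osg_of_os {P a P'} (h : OS P a P') : OSG P a P' (Step P a P') := ⟨h, id⟩

/-! ### Inversion of steps through the constructors -/

lemma step_rename_inv {P f e S} (h : Step (.rename P f) e S) :
    ∃ a Q, Step P a Q ∧ (∀ l ∈ a, (f.toFun l).isSome) ∧ e = f.onAction a ∧ S = .rename Q f := by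
  cases h with
  | rename h hd => exact ⟨_, _, h, hd, rfl, rfl⟩

lemma step_restrict_inv {P L e S} (h : Step (.restrict P L) e S) :
    ∃ Q, Step P e Q ∧ (∀ l ∈ e, l ∉ L ∧ Label.bar l ∉ L) ∧ S = .restrict Q L := by
  cases h with
  | restrict h hd => exact ⟨_, h, hd, rfl⟩

lemma onAction_eq_empty {f : Renaming} {a : Act}
    (hd : ∀ l ∈ a, (f.toFun l).isSome) (h : f.onAction a = ∅) : a = ∅ := by
  by_contra hne
  obtain ⟨x, hx⟩ := Finset.nonempty_iff_ne_empty.mpr hne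
  obtain ⟨y, hy⟩ := Option.isSome_iff_exists.mp (hd x hx)
  have : y ∈ f.onAction a := by
    simp only [Renaming.onAction, Finset.mem_filterMap]
    exact ⟨x, hx, hy⟩
  simp [h] at this

lemma os_rename_inv {P f e S} (h : OS (.rename P f) e S) :
    ∃ a Q, OS P a Q ∧ (Step (.rename P f) e S → Step P a Q) ∧
      (∀ l ∈ a, (f.toFun l).isSome) ∧ e = f.onAction a ∧ S = .rename Q f := by
  rcases h with h | ⟨rfl, rfl⟩
  · obtain ⟨a, Q, hs, hd, rfl, rfl⟩ := step_rename_inv h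
    exact ⟨a, Q, Or.inl hs, fun _ => hs, hd, rfl, rfl⟩
  · refine ⟨∅, P, Or.inr ⟨rfl, rfl⟩, ?_, by simp, by simp, rfl⟩
    intro hstep
    obtain ⟨a, Q, hs, hd, ha, hQ⟩ := step_rename_inv hstep
    obtain rfl : a = ∅ := onAction_eq_empty hd ha.symm
    obtain rfl : Q = P := by injection hQ with h; exact h.symm
    exact hs

lemma step_par_inv {P Q e S} (h : Step (.par P Q) e S) :
    ∃ aP aQ b P' Q', OS P aP P' ∧ OS Q aQ Q' ∧ (Step P aP P' ∨ Step Q aQ Q') ∧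
      b ⊆ aP ∧ b.image Label.bar ⊆ aQ ∧
      Disjoint (aP \ b) (aQ \ b.image Label.bar) ∧
      e = (aP \ b) ∪ (aQ \ b.image Label.bar) ∧ S = .par P' Q' := by
  cases h with
  | parL h =>
      exact ⟨_, ∅, ∅, _, _, Or.inl h, Or.inr ⟨rfl, rfl⟩, Or.inl h, by simp, by simp,
        by simp, by simp, rfl⟩
  | parR h =>
      exact ⟨∅, _, ∅, _, _, Or.inr ⟨rfl, rfl⟩, Or.inl h, Or.inr h, by simp, by simp,
        by simp, by simp, rfl⟩
  | @sync _ _ P' Q' a b c h1 h2 d1 d2 d3 =>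
      have e1 : (a ∪ b) \ b = a := Finset.union_sdiff_cancel_right d1
      have e2 : (b.image Label.bar ∪ c) \ b.image Label.bar = c :=
        Finset.union_sdiff_cancel_left d2
      refine ⟨a ∪ b, b.image Label.bar ∪ c, b, P', Q', Or.inl h1, Or.inl h2, Or.inl h1,
        Finset.subset_union_right, Finset.subset_union_left, ?_, ?_, rfl⟩
      · rw [e1, e2]; exact d3
      · rw [e1, e2]

/-- Construct a step of a parallel composition from optional steps of the components. -/
lemma osg_par {P aP P' gP Q aQ Q' gQ b} (hP : OSG P aP P' gP) (hQ : OSG Q aQ Q' gQ)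
    (hb : b ⊆ aP) (hb' : b.image Label.bar ⊆ aQ)
    (hd : Disjoint (aP \ b) (aQ \ b.image Label.bar)) :
    OSG (.par P Q) ((aP \ b) ∪ (aQ \ b.image Label.bar)) (.par P' Q') (gP ∨ gQ) := by
  have sync' : Step P aP P' → Step Q aQ Q' →
      Step (.par P Q) ((aP \ b) ∪ (aQ \ b.image Label.bar)) (.par P' Q') := by
    intro hsP hsQ
    have h1 : Step P ((aP \ b) ∪ b) P' := by
      rw [Finset.sdiff_union_of_subset hb]; exact hsP
    have h2 : Step Q (b.image Label.bar ∪ (aQ \ b.image Label.bar)) Q' := by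
      rw [Finset.union_sdiff_of_subset hb']; exact hsQ
    exact Step.sync h1 h2 Finset.sdiff_disjoint Finset.disjoint_sdiff hd
  have subL : Step P aP P' →
      Step (.par P Q) ((aP \ b) ∪ (aQ \ b.image Label.bar)) (.par P' Q') := by
    intro hsP
    rcases hQ.1 with hsQ | ⟨h1, h2⟩
    · exact sync' hsP hsQ
    · subst h2
      have hb0 : b = ∅ := by
        have h2 : b.image Label.bar ⊆ (∅ : Act) := h1 ▸ hb'
        simpa using Finset.image_eq_empty.mp (Finset.subset_empty.mp h2)
      subst hb0
      simpa [h1] using Step.parL hsP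
  have subR : Step Q aQ Q' →
      Step (.par P Q) ((aP \ b) ∪ (aQ \ b.image Label.bar)) (.par P' Q') := by
    intro hsQ
    rcases hP.1 with hsP | ⟨h1, h2⟩
    · exact sync' hsP hsQ
    · subst h2
      have hb0 : b = ∅ := Finset.subset_empty.mp (h1 ▸ hb)
      subst hb0
      simpa [h1] using Step.parR hsQ
  constructor
  · rcases hP.1 with hsP | ⟨h1, h2⟩
    · exact Or.inl (subL hsP)
    · rcases hQ.1 with hsQ | ⟨h3, h4⟩
      · exact Or.inl (subR hsQ)
      · subst h2; subst h4
        have hb0 : b = ∅ := Finset.subset_empty.mp (h1 ▸ hb)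
        refine Or.inr ⟨?_, rfl⟩
        simp [h1, h3, hb0]
  · rintro (g | g)
    · exact subL (hP.2 g)
    · exact subR (hQ.2 g)

lemma osg_rename {P a P' g} {f : Renaming} (h : OSG P a P' g)
    (hd : ∀ l ∈ a, (f.toFun l).isSome) :
    OSG (.rename P f) (f.onAction a) (.rename P' f) g := by
  refine ⟨?_, fun hg => Step.rename (h.2 hg) hd⟩
  rcases h.1 with hs | ⟨rfl, rfl⟩
  · exact Or.inl (Step.rename hs hd)
  · exact Or.inr ⟨by simp, rfl⟩

lemma osg_restrict {P a P' g L} (h : OSG P a P' g)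
    (hd : ∀ l ∈ a, l ∉ L ∧ Label.bar l ∉ L) :
    OSG (.restrict P L) a (.restrict P' L) g := by
  refine ⟨?_, fun hg => Step.restrict (h.2 hg) hd⟩
  rcases h.1 with hs | ⟨rfl, rfl⟩
  · exact Or.inl (Step.restrict hs hd)
  · exact Or.inr ⟨rfl, rfl⟩

lemma os_restrict_inv {P L e S} (h : OS (.restrict P L) e S) :
    ∃ Q, OS P e Q ∧ (Step (.restrict P L) e S → Step P e Q ∧ (∀ l ∈ e, l ∉ L ∧ Label.bar l ∉ L)) ∧
      S = .restrict Q L := by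
  rcases h with h | ⟨rfl, rfl⟩
  · obtain ⟨Q, hs, hd, rfl⟩ := step_restrict_inv h
    exact ⟨Q, Or.inl hs, fun _ => ⟨hs, hd⟩, rfl⟩
  · refine ⟨P, Or.inr ⟨rfl, rfl⟩, ?_, rfl⟩
    intro hstep
    obtain ⟨Q, hs, hd, hQ⟩ := step_restrict_inv hstep
    obtain rfl : Q = P := by injection hQ with h; exact h.symm
    exact ⟨hs, hd⟩

/-! ### Pointwise facts about the name maps -/

lemma inj_g12 : Function.Injective g12 := fun a b h => by simp only [g12] at h; omega
lemma inj_g23 : Function.Injective g23 := fun a b h => by simp only [g23] at h; omega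
lemma inj_gr : Function.Injective gr := fun a b h => by simp only [gr] at h; omega

lemma bar_g12_eq {l : Label} (h : l.name % 2 = 1) :
    Label.bar (mapL g12 l) = mapL g23 (pq l) := by
  cases l <;> simp_all [mapL, pq, Label.bar, g12, g23, Label.name] <;> omega

lemma gr_qr_eq {l : Label} (h : l.name % 2 = 1) :
    mapL gr (qr l) = Label.bar l := by
  cases l <;> simp_all [mapL, qr, Label.bar, gr, gh, Label.name] <;> omega

lemma gh_pq_eq {l : Label} (h : l.name % 2 = 1) :
    mapL gh (pq l) = qr l := by
  cases l <;> simp_all [mapL, pq, qr, Label.bar, gh, Label.name] <;> omega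

lemma g13_g12_eq {l : Label} (h : l.name % 2 = 0) :
    mapL g13i (mapL g12 l) = l := by
  cases l <;> simp_all [mapL, g13i, g12, Label.name] <;> omega

lemma g13_g23_eq {l : Label} (h : l.name % 2 = 1) :
    mapL g13i (mapL g23 l) = l := by
  cases l <;> simp_all [mapL, g13i, g23, Label.name] <;> omega

lemma image_eq_image_cancel {s t : Finset Label} {f : Label → Label}
    (h : s.image f = t.image f)
    (hinj : ∀ x ∈ s, ∀ y ∈ t, f x = f y → x = y) : s = t := by
  ext a
  constructor
  · intro ha
    have h2 : f a ∈ t.image f := h ▸ Finset.mem_image_of_mem f ha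
    obtain ⟨c, hc, hfc⟩ := Finset.mem_image.mp h2
    rw [hinj a ha c hc hfc.symm]; exact hc
  · intro ha
    have h2 : f a ∈ s.image f := h.symm ▸ Finset.mem_image_of_mem f ha
    obtain ⟨c, hc, hfc⟩ := Finset.mem_image.mp h2
    rw [← hinj c hc a ha hfc]; exact hc

lemma disj_ev_od (a b : Act) : Disjoint (ev a) (od b) := by
  rw [Finset.disjoint_left]; intro l hl hl'
  rw [mem_ev] at hl; rw [mem_od] at hl'; omega

/-- `φ₂₃` applied to the P↔Q synchronization condition. -/
lemma key_pq {aP aQ : Act} (h1 : ev aQ = (od aP).image pq) :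
    ((od aP).image (mapL g12)).image Label.bar = (ev aQ).image (mapL g23) := by
  rw [h1, Finset.image_image, Finset.image_image]
  refine Finset.image_congr fun l hl => ?_
  simp only [Finset.mem_coe, mem_od] at hl
  exact bar_g12_eq hl.2

/-- `r` applied to the Q↔R synchronization condition. -/
lemma key_qr {aX aY : Act} (h2 : aY = (od aX).image qr) :
    aY.image (mapL gr) = (od aX).image Label.bar := by
  rw [h2, Finset.image_image]
  refine Finset.image_congr fun l hl => ?_
  simp only [Finset.mem_coe, mem_od] at hl
  exact gr_qr_eq hl.2

lemma sdiff_image_od {a : Act} {g : ℕ → ℕ} (hg : Function.Injective g) :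
    a.image (mapL g) \ (od a).image (mapL g) = (ev a).image (mapL g) := by
  rw [← Finset.image_sdiff _ _ (mapL_injective hg), sdiff_od]

lemma sdiff_image_ev {a : Act} {g : ℕ → ℕ} (hg : Function.Injective g) :
    a.image (mapL g) \ (ev a).image (mapL g) = (od a).image (mapL g) := by
  rw [← Finset.image_sdiff _ _ (mapL_injective hg), sdiff_ev]

lemma disj_1223 (aP aQ : Act) :
    Disjoint ((ev aP).image (mapL g12)) ((od aQ).image (mapL g23)) := by
  rw [Finset.disjoint_left]; intro l hl hl'
  obtain ⟨x, hx, rfl⟩ := Finset.mem_image.mp hl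
  obtain ⟨y, hy, hxy⟩ := Finset.mem_image.mp hl'
  rw [mem_ev] at hx; rw [mem_od] at hy
  have hn := congrArg Label.name hxy
  simp only [name_mapL, g12, g23] at hn
  omega

lemma names_ne1 {aP aQ : Act} :
    ∀ l ∈ (ev aP).image (mapL g12) ∪ (od aQ).image (mapL g23), l.name % 3 ≠ 1 := by
  intro l hl
  rcases Finset.mem_union.mp hl with h | h <;> obtain ⟨x, hx, rfl⟩ := Finset.mem_image.mp h
  · rw [mem_ev] at hx; simp only [name_mapL, g12]; omega
  · rw [mem_od] at hx; simp only [name_mapL, g23]; omega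

lemma g13_cancel (aP aQ : Act) :
    ((ev aP).image (mapL g12) ∪ (od aQ).image (mapL g23)).image (mapL g13i)
      = ev aP ∪ od aQ := by
  rw [Finset.image_union, Finset.image_image, Finset.image_image]
  congr 1
  · calc (ev aP).image (mapL g13i ∘ mapL g12)
        = (ev aP).image id := Finset.image_congr fun l hl => by
          simp only [Finset.mem_coe, mem_ev] at hl
          simpa [Function.comp] using g13_g12_eq hl.2
      _ = ev aP := Finset.image_id
  · calc (od aQ).image (mapL g13i ∘ mapL g23)
        = (od aQ).image id := Finset.image_congr fun l hl => by
          simp only [Finset.mem_coe, mem_od] at hl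
          simpa [Function.comp] using g13_g23_eq hl.2
      _ = od aQ := Finset.image_id

/-! ### Characterization of steps of `comp P Q` -/

lemma comp_osg {P aP P' gP Q aQ Q' gQ} (hP : OSG P aP P' gP) (hQ : OSG Q aQ Q' gQ)
    (h1 : ev aQ = (od aP).image pq) :
    OSG (comp P Q) (ev aP ∪ od aQ) (comp P' Q') (gP ∨ gQ) := by
  have hPr := osg_rename (f := phi12) hP (fun l _ => isSome_phi12 l)
  have hQr := osg_rename (f := phi23) hQ (fun l _ => isSome_phi23 l)
  rw [onAction_phi12] at hPr
  rw [onAction_phi23] at hQr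
  have hb : (od aP).image (mapL g12) ⊆ aP.image (mapL g12) :=
    Finset.image_subset_image (Finset.filter_subset _ _)
  have hb' : ((od aP).image (mapL g12)).image Label.bar ⊆ aQ.image (mapL g23) := by
    rw [key_pq h1]; exact Finset.image_subset_image (Finset.filter_subset _ _)
  have hA1 : aP.image (mapL g12) \ (od aP).image (mapL g12) = (ev aP).image (mapL g12) :=
    sdiff_image_od inj_g12
  have hA2 : aQ.image (mapL g23) \ ((od aP).image (mapL g12)).image Label.bar
      = (od aQ).image (mapL g23) := by
    rw [key_pq h1]; exact sdiff_image_ev inj_g23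
  have hpar := osg_par hPr hQr hb hb' (by rw [hA1, hA2]; exact disj_1223 aP aQ)
  rw [hA1, hA2] at hpar
  have hres := osg_restrict (L := Lab2) hpar (fun l hl => by
    have := names_ne1 l hl
    constructor <;> simp only [mem_Lab2, name_bar] <;> exact this)
  have hren := osg_rename (f := phi13Inv) hres
    (fun l hl => isSome_phi13Inv (names_ne1 l hl))
  rw [onAction_phi13Inv _ names_ne1, g13_cancel] at hren
  exact hren

lemma comp_step_inv {P Q aC C'} (h : Step (comp P Q) aC C') :
    ∃ aP aQ P' Q', OS P aP P' ∧ OS Q aQ Q' ∧ (Step P aP P' ∨ Step Q aQ Q') ∧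
      ev aQ = (od aP).image pq ∧ aC = ev aP ∪ od aQ ∧ C' = comp P' Q' := by
  obtain ⟨A, S1, hs1, hd1, rfl, rfl⟩ := step_rename_inv h
  obtain ⟨S2, hs2, hd2, rfl⟩ := step_restrict_inv hs1
  obtain ⟨A1, A2, b, P1, Q1, hOP, hOQ, hgen, hb, hb', hdisj, rfl, rfl⟩ := step_par_inv hs2
  obtain ⟨aP, P', hOP', hgP, _, rfl, rfl⟩ := os_rename_inv hOP
  obtain ⟨aQ, Q', hOQ', hgQ, _, rfl, rfl⟩ := os_rename_inv hOQ
  have hgen' : Step P aP P' ∨ Step Q aQ Q' := hgen.imp hgP hgQ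
  simp only [onAction_phi12, onAction_phi23] at hb hb' hdisj hd2 hd1 ⊢
  have hAmod : ∀ l ∈ (aP.image (mapL g12) \ b) ∪
      (aQ.image (mapL g23) \ b.image Label.bar), l.name % 3 ≠ 1 := by
    intro l hl
    have h2 := (hd2 l hl).1
    simpa [mem_Lab2] using h2
  -- b is exactly the image of the odd part of aP
  have hbeq : b = (od aP).image (mapL g12) := by
    ext l
    constructor
    · intro hl
      obtain ⟨x, hx, rfl⟩ := Finset.mem_image.mp (hb hl)
      have hlbar : Label.bar (mapL g12 x) ∈ aQ.image (mapL g23) :=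
        hb' (Finset.mem_image_of_mem _ hl)
      obtain ⟨y, hy, hxy⟩ := Finset.mem_image.mp hlbar
      have hn := congrArg Label.name hxy
      simp only [name_mapL, name_bar] at hn
      have hodd : x.name % 2 = 1 := by simp only [g12, g23] at hn; omega
      exact Finset.mem_image_of_mem _ (mem_od.mpr ⟨hx, hodd⟩)
    · intro hl
      obtain ⟨x, hx, rfl⟩ := Finset.mem_image.mp hl
      rw [mem_od] at hx
      by_contra hnb
      have h3 : mapL g12 x ∈ aP.image (mapL g12) \ b :=
        Finset.mem_sdiff.mpr ⟨Finset.mem_image_of_mem _ hx.1, hnb⟩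
      have h4 := hAmod _ (Finset.mem_union_left _ h3)
      simp only [name_mapL, g12] at h4; omega
  -- the bar-image of b is exactly the image of the even part of aQ
  have hbarb : b.image Label.bar = (ev aQ).image (mapL g23) := by
    ext l
    constructor
    · intro hl
      obtain ⟨y, hy, rfl⟩ := Finset.mem_image.mp (hb' hl)
      obtain ⟨m, hm, hml⟩ := Finset.mem_image.mp hl
      rw [hbeq] at hm
      obtain ⟨x, hx, rfl⟩ := Finset.mem_image.mp hm
      rw [mem_od] at hx
      have hn := congrArg Label.name hml
      simp only [name_mapL, name_bar] at hn
      have hyev : y.name % 2 = 0 := by simp only [g12, g23] at hn; omega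
      exact Finset.mem_image_of_mem _ (mem_ev.mpr ⟨hy, hyev⟩)
    · intro hl
      obtain ⟨y, hy, rfl⟩ := Finset.mem_image.mp hl
      rw [mem_ev] at hy
      by_contra hnb
      have h3 : mapL g23 y ∈ aQ.image (mapL g23) \ b.image Label.bar :=
        Finset.mem_sdiff.mpr ⟨Finset.mem_image_of_mem _ hy.1, hnb⟩
      have h4 := hAmod _ (Finset.mem_union_right _ h3)
      simp only [name_mapL, g23] at h4; omega
  have hcond1 : ev aQ = (od aP).image pq := by
    refine image_eq_image_cancel (f := mapL g23) ?_ ?_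
    · rw [← hbarb, hbeq, Finset.image_image, Finset.image_image]
      refine (Finset.image_congr fun l hl => ?_).symm
      simp only [Finset.mem_coe, mem_od] at hl
      simpa [Function.comp] using (bar_g12_eq hl.2).symm
    · intro x _ y _ hxy
      exact mapL_injective inj_g23 hxy
  have hA1 : aP.image (mapL g12) \ b = (ev aP).image (mapL g12) := by
    rw [hbeq]; exact sdiff_image_od inj_g12
  have hA2 : aQ.image (mapL g23) \ b.image Label.bar = (od aQ).image (mapL g23) := by
    rw [hbarb]; exact sdiff_image_ev inj_g23
  refine ⟨aP, aQ, P', Q', hOP', hOQ', hgen', hcond1, ?_, rfl⟩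
  rw [hA1, hA2, onAction_phi13Inv _ names_ne1, g13_cancel]

/-! ### Characterization of steps of `rapp X Y` -/

lemma rapp_osg {X aX X' gX Y aY Y' gY} (hX : OSG X aX X' gX) (hY : OSG Y aY Y' gY)
    (h2 : aY = (od aX).image qr) :
    OSG (rapp X Y) ((ev aX).image (mapL gh)) (rapp X' Y') (gX ∨ gY) := by
  have hYr := osg_rename (f := rRen) hY (fun l _ => isSome_rRen l)
  rw [onAction_rRen] at hYr
  have hb : od aX ⊆ aX := Finset.filter_subset _ _
  have hb' : (od aX).image Label.bar ⊆ aY.image (mapL gr) := by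
    rw [key_qr h2]
  have hA2 : aY.image (mapL gr) \ (od aX).image Label.bar = ∅ := by
    rw [key_qr h2, Finset.sdiff_self]
  have hpar := osg_par hX hYr hb hb' (by rw [sdiff_od, hA2]; exact Finset.disjoint_empty_right _)
  rw [sdiff_od, hA2, Finset.union_empty] at hpar
  have hres := osg_restrict (L := LabR) hpar (fun l hl => by
    rw [mem_ev] at hl
    constructor <;> simp only [mem_LabR, name_bar] <;> omega)
  have hren := osg_rename (f := lInv) hres
    (fun l hl => isSome_lInv (mem_ev.mp hl).2)
  rw [onAction_lInv _ (fun l hl => (mem_ev.mp hl).2)] at hren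
  exact hren

lemma rapp_step_inv {X Y aO S} (h : Step (rapp X Y) aO S) :
    ∃ aX aY X' Y', OS X aX X' ∧ OS Y aY Y' ∧ (Step X aX X' ∨ Step Y aY Y') ∧
      aY = (od aX).image qr ∧ aO = (ev aX).image (mapL gh) ∧ S = rapp X' Y' := by
  obtain ⟨e0, S1, hs1, hd1, rfl, rfl⟩ := step_rename_inv h
  obtain ⟨S2, hs2, hd2, rfl⟩ := step_restrict_inv hs1
  obtain ⟨aX, aYr, b, X', Y1, hOX, hOY, hgen, hb, hb', hdisj, rfl, rfl⟩ := step_par_inv hs2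
  obtain ⟨aY, Y', hOY', hgY, _, rfl, rfl⟩ := os_rename_inv hOY
  have hgen' : Step X aX X' ∨ Step Y aY Y' := hgen.imp id hgY
  simp only [onAction_rRen] at hb' hdisj hd2 hd1 ⊢
  have heven : ∀ l ∈ (aX \ b) ∪ (aY.image (mapL gr) \ b.image Label.bar),
      l.name % 2 = 0 := by
    intro l hl
    have h2 := (hd2 l hl).1
    simp only [mem_LabR] at h2
    omega
  have hYempty : aY.image (mapL gr) \ b.image Label.bar = ∅ := by
    rw [Finset.eq_empty_iff_forall_notMem]
    intro l hl
    have h2 := heven l (Finset.mem_union_right _ hl)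
    obtain ⟨y, hy, rfl⟩ := Finset.mem_image.mp (Finset.mem_sdiff.mp hl).1
    simp only [name_mapL, gr] at h2
    omega
  have hbarb : b.image Label.bar = aY.image (mapL gr) :=
    le_antisymm hb' (Finset.sdiff_eq_empty_iff_subset.mp hYempty)
  have hbodd : b = od aX := by
    ext l
    constructor
    · intro hl
      have h2 : Label.bar l ∈ aY.image (mapL gr) := by
        rw [← hbarb]; exact Finset.mem_image_of_mem _ hl
      obtain ⟨y, hy, hyl⟩ := Finset.mem_image.mp h2
      have hn := congrArg Label.name hyl
      simp only [name_mapL, name_bar, gr] at hn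
      exact mem_od.mpr ⟨hb hl, by omega⟩
    · intro hl
      rw [mem_od] at hl
      by_contra hnb
      have h3 : l ∈ aX \ b := Finset.mem_sdiff.mpr ⟨hl.1, hnb⟩
      have h4 := heven l (Finset.mem_union_left _ h3)
      omega
  have hcond2 : aY = (od aX).image qr := by
    refine image_eq_image_cancel (f := mapL gr) ?_ ?_
    · rw [Finset.image_image, ← hbarb, hbodd]
      refine Finset.image_congr fun l hl => ?_
      simp only [Finset.mem_coe, mem_od] at hl
      simpa [Function.comp] using (gr_qr_eq hl.2).symm
    · intro x _ y _ hxy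
      exact mapL_injective inj_gr hxy
  refine ⟨aX, aY, X', Y', hOX, hOY', hgen', hcond2, ?_, rfl⟩
  rw [hYempty, Finset.union_empty, hbodd, sdiff_od,
    onAction_lInv _ (fun l hl => (mem_ev.mp hl).2)]

/-! ### The canonical characterization of steps of both sides -/

/-- The canonical data underlying a step of either `((P ; Q) | R⟩` or `(P | (Q | R⟩⟩`. -/
def Canon (P Q R : Proc) (e : Act) (P' Q' R' : Proc) : Prop :=
  ∃ aP aQ aR, OS P aP P' ∧ OS Q aQ Q' ∧ OS R aR R' ∧
    (Step P aP P' ∨ Step Q aQ Q' ∨ Step R aR R') ∧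
    ev aQ = (od aP).image pq ∧
    aR = (od aQ).image qr ∧
    e = (ev aP).image (mapL gh)

lemma stepL_iff {P Q R e S} :
    Step (rapp (comp P Q) R) e S ↔
      ∃ P' Q' R', Canon P Q R e P' Q' R' ∧ S = rapp (comp P' Q') R' := by
  constructor
  · intro h
    obtain ⟨aX, aY, X', Y', hOX, hOY, hgen, hcond2, rfl, rfl⟩ := rapp_step_inv h
    have hsplit : Step (comp P Q) aX X' ∨ (aX = ∅ ∧ X' = comp P Q ∧ Step R aY Y') := by
      rcases hOX with hs | ⟨rfl, rfl⟩
      · exact Or.inl hs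
      · rcases hgen with hs | hs
        · exact Or.inl hs
        · exact Or.inr ⟨rfl, rfl, hs⟩
    rcases hsplit with hs | ⟨rfl, rfl, hsR⟩
    · obtain ⟨aP, aQ, P', Q', hOP, hOQ, hg, hc1, rfl, rfl⟩ := comp_step_inv hs
      refine ⟨P', Q', Y', ⟨aP, aQ, aY, hOP, hOQ, hOY, ?_, hc1, ?_, ?_⟩, rfl⟩
      · rcases hg with h | h
        · exact Or.inl h
        · exact Or.inr (Or.inl h)
      · rw [hcond2]; congr 1; simp
      · congr 1; simp
    · refine ⟨P, Q, Y', ⟨∅, ∅, aY, Or.inr ⟨rfl, rfl⟩, Or.inr ⟨rfl, rfl⟩, hOY,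
        Or.inr (Or.inr hsR), by simp, hcond2, rfl⟩, rfl⟩
  · rintro ⟨P', Q', R', ⟨aP, aQ, aR, hOP, hOQ, hOR, hg, hc1, hc2, rfl⟩, rfl⟩
    have hosg := rapp_osg (comp_osg (osg_of_os hOP) (osg_of_os hOQ) hc1) (osg_of_os hOR)
      (by rw [hc2]; congr 1; simp)
    have hact : ev (ev aP ∪ od aQ) = ev aP := by simp
    rw [hact] at hosg
    exact hosg.2 (by tauto)

lemma stepM_iff {P Q R e S} :
    Step (rapp P (rapp Q R)) e S ↔
      ∃ P' Q' R', Canon P Q R e P' Q' R' ∧ S = rapp P' (rapp Q' R') := by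
  constructor
  · intro h
    obtain ⟨aP, aY, P', Y', hOP, hOY, hgen, hcond2, rfl, rfl⟩ := rapp_step_inv h
    have hsplit : Step (rapp Q R) aY Y' ∨ (aY = ∅ ∧ Y' = rapp Q R ∧ Step P aP P') := by
      rcases hOY with hs | ⟨rfl, rfl⟩
      · exact Or.inl hs
      · rcases hgen with hs | hs
        · exact Or.inr ⟨rfl, rfl, hs⟩
        · exact Or.inl hs
    rcases hsplit with hs | ⟨rfl, rfl, hsP⟩
    · obtain ⟨aQ, aR, Q', R', hOQ, hOR, hg, hc2, rfl, rfl⟩ := rapp_step_inv hs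
      have hc1 : ev aQ = (od aP).image pq := by
        refine image_eq_image_cancel (f := mapL gh) ?_ ?_
        · rw [hcond2, Finset.image_image]
          refine Finset.image_congr fun l hl => ?_
          simp only [Finset.mem_coe, mem_od] at hl
          simpa [Function.comp] using (gh_pq_eq hl.2).symm
        · intro x hx y hy hxy
          rw [mem_ev] at hx
          obtain ⟨z, hz, rfl⟩ := Finset.mem_image.mp hy
          rw [mem_od] at hz
          rcases hx with ⟨_, hx2⟩
          rcases hz with ⟨_, hz2⟩
          cases x <;> rcases z with z | z <;>
            simp_all [mapL, pq, Label.bar, gh, Label.name] <;> omega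
      exact ⟨P', Q', R', ⟨aP, aQ, aR, hOP, hOQ, hOR, Or.inr hg, hc1, hc2, rfl⟩, rfl⟩
    · have hodP : od aP = ∅ := Finset.image_eq_empty.mp hcond2.symm
      refine ⟨P', Q, R, ⟨aP, ∅, ∅, hOP, Or.inr ⟨rfl, rfl⟩, Or.inr ⟨rfl, rfl⟩,
        Or.inl hsP, ?_, by simp, rfl⟩, rfl⟩
      rw [hodP]; simp
  · rintro ⟨P', Q', R', ⟨aP, aQ, aR, hOP, hOQ, hOR, hg, hc1, hc2, rfl⟩, rfl⟩
    have hinner := rapp_osg (osg_of_os hOQ) (osg_of_os hOR) hc2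
    have hcond : (ev aQ).image (mapL gh) = (od aP).image qr := by
      rw [hc1, Finset.image_image]
      exact Finset.image_congr fun l hl => by
        simp only [Finset.mem_coe, mem_od] at hl
        simpa [Function.comp] using gh_pq_eq hl.2
    have houter := rapp_osg (osg_of_os hOP) hinner hcond
    exact houter.2 (by tauto)

lemma transferL {P Q R e S} (h : Step (rapp (comp P Q) R) e S) :
    ∃ P' Q' R', S = rapp (comp P' Q') R' ∧
      Step (rapp P (rapp Q R)) e (rapp P' (rapp Q' R')) := by
  obtain ⟨P', Q', R', hc, rfl⟩ := stepL_iff.mp h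
  exact ⟨P', Q', R', rfl, stepM_iff.mpr ⟨P', Q', R', hc, rfl⟩⟩

lemma transferM {P Q R e S} (h : Step (rapp P (rapp Q R)) e S) :
    ∃ P' Q' R', S = rapp P' (rapp Q' R') ∧
      Step (rapp (comp P Q) R) e (rapp (comp P' Q') R') := by
  obtain ⟨P', Q', R', hc, rfl⟩ := stepM_iff.mp h
  exact ⟨P', Q', R', rfl, stepL_iff.mpr ⟨P', Q', R', hc, rfl⟩⟩

/-! ### From strong bisimulation to equality of failures -/

/-- One-sided strong simulation transfer. -/
def StepTransfer (Rl : Proc → Proc → Prop) : Prop :=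
  ∀ ⦃X Y⦄, Rl X Y → ∀ ⦃a S⦄, Step X a S → ∃ T, Step Y a T ∧ Rl S T

lemma tau_transfer {Rl} (hT : StepTransfer Rl) {X Y X'} (h : Rl X Y) (hs : TauStar X X') :
    ∃ Y', TauStar Y Y' ∧ Rl X' Y' := by
  induction hs with
  | refl => exact ⟨Y, Relation.ReflTransGen.refl, h⟩
  | tail _ hstep ih =>
      obtain ⟨Y1, hY1, hR1⟩ := ih
      obtain ⟨Y2, hY2, hR2⟩ := hT hR1 hstep
      exact ⟨Y2, hY1.tail hY2, hR2⟩

lemma obs_transfer {Rl} (hT : StepTransfer Rl) {X Y a X'} (h : Rl X Y) (ho : Obs X a X') :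
    ∃ Y', Obs Y a Y' ∧ Rl X' Y' := by
  obtain ⟨X1, X2, h1, h2, h3⟩ := ho
  obtain ⟨Y1, hY1, hR1⟩ := tau_transfer hT h h1
  obtain ⟨Y2, hY2, hR2⟩ := hT hR1 h2
  obtain ⟨Y3, hY3, hR3⟩ := tau_transfer hT hR2 h3
  exact ⟨Y3, ⟨Y1, Y2, hY1, hY2, hY3⟩, hR3⟩

lemma obsSeq_transfer {Rl} (hT : StepTransfer Rl) {X s X'} (ho : ObsSeq X s X') :
    ∀ {Y}, Rl X Y → ∃ Y', ObsSeq Y s Y' ∧ Rl X' Y' := by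
  induction ho with
  | nil ht =>
      intro Y h
      obtain ⟨Y', hY', hR'⟩ := tau_transfer hT h ht
      exact ⟨Y', ObsSeq.nil hY', hR'⟩
  | cons ho _ ih =>
      intro Y h
      obtain ⟨Y1, hY1, hR1⟩ := obs_transfer hT h ho
      obtain ⟨Y', hY', hR'⟩ := ih hR1
      exact ⟨Y', ObsSeq.cons hY1 hY', hR'⟩

lemma failures_subset {Rl} (hT : StepTransfer Rl)
    (hT' : StepTransfer (fun a b => Rl b a)) {X Y} (h : Rl X Y) :
    failures X ⊆ failures Y := by
  rintro ⟨s, Xr⟩ ⟨h1, h2, Qf, hseq, href⟩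
  refine ⟨h1, h2, ?_⟩
  obtain ⟨Y', hY', hR'⟩ := obsSeq_transfer hT hseq h
  refine ⟨Y', hY', ?_⟩
  rintro a ha ⟨T, hTobs⟩
  obtain ⟨S, hS, _⟩ := obs_transfer (Rl := fun a b => Rl b a) hT' hR' hTobs
  exact href a ha ⟨S, hS⟩

end RappComp

/-- **Right application is compatible with composition**:
`((P ; Q) | R⟩ ≈_f (P | (Q | R⟩⟩`. -/
theorem rapp_comp_failures (P Q R : Proc) :
    FailEq (rapp (comp P Q) R) (rapp P (rapp Q R))  := by
  have hT : RappComp.StepTransfer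
      (fun X Y => ∃ p q r, X = rapp (comp p q) r ∧ Y = rapp p (rapp q r)) := by
    rintro X Y ⟨p, q, r, rfl, rfl⟩ a S hs
    obtain ⟨p', q', r', rfl, hstep⟩ := RappComp.transferL hs
    exact ⟨_, hstep, p', q', r', rfl, rfl⟩
  have hT' : RappComp.StepTransfer
      (fun X Y => ∃ p q r, Y = rapp (comp p q) r ∧ X = rapp p (rapp q r)) := by
    rintro X Y ⟨p, q, r, rfl, rfl⟩ a S hs
    obtain ⟨p', q', r', rfl, hstep⟩ := RappComp.transferM hs
    exact ⟨_, hstep, p', q', r', rfl, rfl⟩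
  exact Set.Subset.antisymm
    (RappComp.failures_subset hT hT' ⟨P, Q, R, rfl, rfl⟩)
    (RappComp.failures_subset hT' hT ⟨P, Q, R, rfl, rfl⟩)
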